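/- arXiv:2511.18118 — 2 statements merged into one kernel-verified Lean document; each statement's English description precedes it below -/
import Mathlib

section
/- Let M ∈ ℕ and let h ∈ ℂ satisfy 2M < Re(2h) < 2M+2. Let u : ℝ → ℂ be (2M+1)-times continuously differentiable and suppose: (i) there are constants C, c > 0 with ‖u^{(k)}(t)‖ ≤ C·e^{−c t} for all t ≥ 0 and all 0 ≤ k ≤ 2M+1; (ii) u^{(k)}(0) = 0 for every odd k with k ≤ 2M−1; (iii) the function t ↦ ‖u^{(2M+1)}(t)‖ · t^{2M−Re(2h)} is integrable on (0,∞). Then lim_{ε↓0} ∫_0^∞ K_{2h}^ε(t) · u(t) dt = −(sin(πh)/π) · Γ(2h−2M) · ∫_0^∞ u^{(2M+1)}(t) · t^{−(2h−2M)} dt, where t^{−(2h−2M)} is the principal complex power of the positive real t and sin is the complex sine. -/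
open MeasureTheory

/-- For `ε > 0` and `w ∈ ℂ`, the kernel
`K_w^ε(t) = (Γ(1+w)/(2π)) ((ε+it)^{-(w+1)} + (ε-it)^{-(w+1)})`,
with principal complex powers. -/
noncomputable def K (w : ℂ) (ε : ℝ) (t : ℝ) : ℂ :=
  Complex.Gamma (1 + w) / (2 * (Real.pi : ℂ)) *
    (((ε : ℂ) + Complex.I * (t : ℂ)) ^ (-(w + 1)) +
      ((ε : ℂ) - Complex.I * (t : ℂ)) ^ (-(w + 1)))

open MeasureTheory Set Filter Complex

section helpers
variable {ε σ : ℝ}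

lemma zre (ε σ t : ℝ) : ((ε:ℂ) + σ * (I * t)).re = ε := by simp
lemma zim (ε σ t : ℝ) : ((ε:ℂ) + σ * (I * t)).im = σ * t := by simp

lemma zslit (hε : 0 < ε) (σ t : ℝ) : ((ε:ℂ) + σ * (I * t)) ∈ slitPlane := by
  rw [mem_slitPlane_iff, zre]; exact Or.inl hε

lemma zne (hε : 0 < ε) (σ t : ℝ) : ((ε:ℂ) + σ * (I * t)) ≠ 0 := by
  intro h0
  have := zre ε σ t
  rw [h0] at this
  simp at this
  linarith

lemma norm_cpow_le {z : ℂ} (hz : 0 ≤ z.re) (h0 : z ≠ 0) (s : ℂ) :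
    ‖z ^ (-s)‖ ≤ ‖z‖ ^ (-s.re) * Real.exp (Real.pi/2 * |s.im|) := by
  rw [Complex.norm_cpow_of_ne_zero h0]
  simp only [Complex.neg_re, Complex.neg_im, mul_neg, Real.exp_neg, div_eq_mul_inv, inv_inv]
  refine mul_le_mul_of_nonneg_left (Real.exp_le_exp.2 ?_) (Real.rpow_nonneg (norm_nonneg z) _)
  calc z.arg * s.im ≤ |z.arg * s.im| := le_abs_self _
    _ = |z.arg| * |s.im| := abs_mul _ _
    _ ≤ (Real.pi/2) * |s.im| := by
        refine mul_le_mul_of_nonneg_right ?_ (abs_nonneg _)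
        exact Complex.abs_arg_le_pi_div_two_iff.2 hz

lemma zabs_ge_eps (ε σ t : ℝ) : ε ≤ ‖((ε:ℂ) + σ * (I * t))‖ := by
  have := Complex.re_le_norm ((ε:ℂ) + σ * (I * t))
  rwa [zre] at this

lemma zabs_ge_t (hσ : σ = 1 ∨ σ = -1) (ε t : ℝ) :
    |t| ≤ ‖((ε:ℂ) + σ * (I * t))‖ := by
  have h1 := Complex.abs_im_le_norm ((ε:ℂ) + σ * (I * t))
  rw [zim] at h1
  rcases hσ with h | h <;> subst h <;> simpa [abs_mul] using h1

/-- main kernel norm bound, via `ε`. -/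
lemma kb (hε : 0 < ε) (hrr : 0 ≤ (r : ℂ).re) (t : ℝ) :
    ‖((ε:ℂ) + σ * (I * t)) ^ (-r)‖ ≤ ε ^ (-r.re) * Real.exp (Real.pi/2 * |r.im|) := by
  refine le_trans (norm_cpow_le (by rw [zre]; exact hε.le) (zne hε σ t) r) ?_
  refine mul_le_mul_of_nonneg_right ?_ (Real.exp_nonneg _)
  exact Real.rpow_le_rpow_of_nonpos hε (zabs_ge_eps ε σ t) (neg_nonpos.2 hrr)

/-- kernel norm bound via `t`, uniform in `ε ≥ 0`. -/
lemma kb_t (hε : 0 < ε) (hσ : σ = 1 ∨ σ = -1) {r : ℂ} (hrr : 0 ≤ r.re) (t : ℝ) (ht : 0 < t) :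
    ‖((ε:ℂ) + σ * (I * t)) ^ (-r)‖ ≤ t ^ (-r.re) * Real.exp (Real.pi/2 * |r.im|) := by
  refine le_trans (norm_cpow_le (by rw [zre]; exact hε.le) (zne hε σ t) r) ?_
  refine mul_le_mul_of_nonneg_right ?_ (Real.exp_nonneg _)
  refine Real.rpow_le_rpow_of_nonpos ht ?_ (neg_nonpos.2 hrr)
  · calc t = |t| := (abs_of_pos ht).symm
      _ ≤ _ := zabs_ge_t hσ ε t

end helpers
section helpers2
variable {ε σ : ℝ}

lemma cont_kernel (hε : 0 < ε) (σ : ℝ) (r : ℂ) :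
    Continuous fun t : ℝ => ((ε:ℂ) + σ * (I * t)) ^ (-r) := by
  rw [continuous_iff_continuousAt]
  intro t
  have hz : ContinuousAt (fun t : ℝ => (ε:ℂ) + σ * (I * t)) t := by fun_prop
  exact hz.cpow continuousAt_const (zslit hε σ t)

lemma hasDerivAt_kernel (hε : 0 < ε) (σ : ℝ) (r : ℂ) (t : ℝ) :
    HasDerivAt (fun t : ℝ => ((ε:ℂ) + σ * (I * t)) ^ (-r))
      ((-r) * ((ε:ℂ) + σ * (I * t)) ^ (-r - 1) * ((σ:ℂ) * I)) t := by
  have h1 : HasDerivAt (fun z : ℂ => (ε:ℂ) + (σ:ℂ) * (I * z)) ((σ:ℂ) * I) (t:ℂ) := by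
    have := ((hasDerivAt_id (t:ℂ)).const_mul ((σ:ℂ) * I)).const_add (ε:ℂ)
    simpa [mul_assoc] using this
  have h2 := (h1.cpow_const (c := -r) (by simpa using zslit hε σ t)).comp_ofReal
  simpa using h2

/-- integrability of kernel times exponentially decaying function -/
lemma integrable_aux (hε : 0 < ε) {r : ℂ} (hrr : 0 ≤ r.re)
    {v : ℝ → ℂ} (hvc : Continuous v) {C c : ℝ} (hc : 0 < c)
    (hb : ∀ t : ℝ, 0 ≤ t → ‖v t‖ ≤ C * Real.exp (-c * t)) :
    IntegrableOn (fun t : ℝ => ((ε:ℂ) + σ * (I * t)) ^ (-r) * v t) (Ioi (0:ℝ)) := by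
  have hbd : Integrable (fun t : ℝ => (ε ^ (-r.re) * Real.exp (Real.pi/2 * |r.im|) * C) * Real.exp (-c * t))
      (volume.restrict (Ioi (0:ℝ))) := (exp_neg_integrableOn_Ioi 0 hc).const_mul _
  refine Integrable.mono' hbd (((cont_kernel hε σ r).mul hvc).aestronglyMeasurable) ?_
  rw [ae_restrict_iff' measurableSet_Ioi]
  filter_upwards with t ht
  have ht' : (0:ℝ) ≤ t := le_of_lt ht
  rw [norm_mul]
  have h1 := kb (σ := σ) hε hrr t
  have h2 := hb t ht'
  calc ‖((ε:ℂ) + σ * (I * t)) ^ (-r)‖ * ‖v t‖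
      ≤ (ε ^ (-r.re) * Real.exp (Real.pi/2 * |r.im|)) * (C * Real.exp (-c * t)) := by
        refine mul_le_mul h1 h2 (norm_nonneg _) ?_
        positivity
    _ = _ := by ring

end helpers2
section ibp
variable {ε σ : ℝ}

lemma ibp_step (hε : 0 < ε) (hσ : σ = 1 ∨ σ = -1) {s : ℂ} (hs : 0 < s.re)
    {v v' : ℝ → ℂ} (hv : ∀ t : ℝ, HasDerivAt v (v' t) t) (hv'c : Continuous v')
    {C c : ℝ} (hc : 0 < c)
    (hb : ∀ t : ℝ, 0 ≤ t → ‖v t‖ ≤ C * Real.exp (-c * t))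
    (hb' : ∀ t : ℝ, 0 ≤ t → ‖v' t‖ ≤ C * Real.exp (-c * t)) :
    ∫ t in Ioi (0:ℝ), ((ε:ℂ) + σ * (I * t)) ^ (-(s+1)) * v t
      = (-(σ:ℂ) * I / s) *
        ((ε:ℂ) ^ (-s) * v 0 + ∫ t in Ioi (0:ℝ), ((ε:ℂ) + σ * (I * t)) ^ (-s) * v' t) := by
  have hvc : Continuous v := by
    rw [continuous_iff_continuousAt]; exact fun t => (hv t).continuousAt
  set zf : ℝ → ℂ := fun t => (ε:ℂ) + σ * (I * t) with hzf
  -- the function H and its derivative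
  set H : ℝ → ℂ := fun t => zf t ^ (-s) * v t with hH
  set G : ℝ → ℂ := fun t => ((-s) * zf t ^ (-s - 1) * ((σ:ℂ) * I)) * v t + zf t ^ (-s) * v' t
    with hG
  have hderiv : ∀ t : ℝ, HasDerivAt H (G t) t := fun t =>
    (hasDerivAt_kernel hε σ s t).mul (hv t)
  -- rewrite exponent -s-1 = -(s+1)
  have hexp : ∀ t : ℝ, zf t ^ (-s - 1) = zf t ^ (-(s+1)) := by
    intro t; congr 1; ring
  -- integrability of the two pieces
  have hint1 : IntegrableOn (fun t : ℝ => zf t ^ (-(s+1)) * v t) (Ioi (0:ℝ)) :=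
    integrable_aux hε (by simp; positivity) hvc hc hb
  have hint2 : IntegrableOn (fun t : ℝ => zf t ^ (-s) * v' t) (Ioi (0:ℝ)) :=
    integrable_aux hε hs.le hv'c hc hb'
  have hGeq : G = fun t => ((-s) * ((σ:ℂ) * I)) * (zf t ^ (-(s+1)) * v t) + zf t ^ (-s) * v' t := by
    funext t; rw [hG]; simp only []; rw [hexp t]; ring
  have hintG : IntegrableOn G (Ioi (0:ℝ)) := by
    rw [hGeq]
    exact ((hint1.const_mul _).add hint2)
  -- tendsto at top
  have htop : Tendsto H atTop (nhds (0:ℂ)) := by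
    have hbH : ∀ t : ℝ, 0 ≤ t → ‖H t‖ ≤ (ε ^ (-s.re) * Real.exp (Real.pi/2 * |s.im|) * C) * Real.exp (-c * t) := by
      intro t ht
      rw [hH]; simp only []
      rw [norm_mul]
      calc ‖zf t ^ (-s)‖ * ‖v t‖
          ≤ (ε ^ (-s.re) * Real.exp (Real.pi/2 * |s.im|)) * (C * Real.exp (-c * t)) :=
            mul_le_mul (kb hε hs.le t) (hb t ht) (norm_nonneg _) (by positivity)
        _ = _ := by ring
    have hexp0 : Tendsto (fun t : ℝ => (ε ^ (-s.re) * Real.exp (Real.pi/2 * |s.im|) * C) * Real.exp (-c * t)) atTop (nhds 0) := by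
      rw [show (0:ℝ) = (ε ^ (-s.re) * Real.exp (Real.pi/2 * |s.im|) * C) * 0 by ring]
      refine Tendsto.const_mul _ ?_
      have h3 : Tendsto (fun t : ℝ => c * t) atTop atTop := by
        exact Filter.Tendsto.const_mul_atTop hc tendsto_id
      have h4 := Real.tendsto_exp_neg_atTop_nhds_zero.comp h3
      simpa [Function.comp_def, neg_mul] using h4
    refine squeeze_zero_norm' ?_ hexp0
    filter_upwards [eventually_ge_atTop (0:ℝ)] with t ht using hbH t ht
  -- FTC
  have hcont0 : ContinuousWithinAt H (Ici (0:ℝ)) 0 :=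
    ((hderiv 0).continuousAt).continuousWithinAt
  have key := integral_Ioi_of_hasDerivAt_of_tendsto hcont0 (fun x _ => hderiv x) hintG htop
  -- H 0 = ε^(-s) * v 0
  have hH0 : H 0 = (ε:ℂ) ^ (-s) * v 0 := by
    rw [hH]; simp only [hzf]; norm_num
  rw [hGeq] at key
  rw [integral_add (hint1.const_mul _) hint2, integral_const_mul] at key
  have hs0 : s ≠ 0 := by intro h0; rw [h0] at hs; simp at hs
  rw [hH0] at key
  have hzero : (-s * ((σ:ℂ) * I)) ≠ 0 := by
    simp only [ne_eq, mul_eq_zero, neg_eq_zero]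
    push_neg
    refine ⟨hs0, ?_⟩
    rcases hσ with h | h <;> subst h <;> simp
  have hsolve : ∫ t in Ioi (0:ℝ), zf t ^ (-(s+1)) * v t
      = (0 - (ε:ℂ) ^ (-s) * v 0 - ∫ t in Ioi (0:ℝ), zf t ^ (-s) * v' t) / (-s * ((σ:ℂ) * I)) := by
    rw [eq_div_iff hzero]
    linear_combination key
  have hI2 : (I:ℂ) * I = -1 := Complex.I_mul_I
  set A := (ε:ℂ) ^ (-s) * v 0 with hA
  set B := ∫ t in Ioi (0:ℝ), zf t ^ (-s) * v' t with hB
  show (∫ t in Ioi (0:ℝ), zf t ^ (-(s+1)) * v t) = -(σ:ℂ) * I / s * (A + B)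
  rw [hsolve, div_eq_iff hzero]
  rw [div_mul_eq_mul_div, div_mul_eq_mul_div, eq_comm, div_eq_iff hs0]
  rcases hσ with h | h <;> subst h <;> push_cast <;>
    linear_combination (s*(A+B))*hI2

end ibp
section misc

lemma gamma_prod (w : ℂ) : ∀ n : ℕ, ((n:ℝ) < w.re + 1) →
    Complex.Gamma (w + 1) = Complex.Gamma (w + 1 - n) * ∏ j ∈ Finset.range n, (w - j) := by
  intro n
  induction n with
  | zero => simp
  | succ n ih =>
    intro hn
    have hn' : (n:ℝ) < w.re + 1 := by push_cast at hn ⊢; linarith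
    have hwn : w - n ≠ 0 := by
      intro h0
      have : (w - n).re = 0 := by rw [h0]; simp
      simp only [Complex.sub_re, Complex.natCast_re] at this
      push_cast at hn
      linarith
    rw [ih hn', Finset.prod_range_succ]
    have : Complex.Gamma (w + 1 - n) = (w - n) * Complex.Gamma (w - n) := by
      rw [show w + 1 - n = (w - n) + 1 by ring, Complex.Gamma_add_one _ hwn]
    rw [this, show w + 1 - (n+1 : ℕ) = w - n by push_cast; ring]
    ring

lemma cos_nat_pi (n : ℕ) : Complex.cos ((n:ℂ) * Real.pi) = (-1)^n := by
  induction n with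
  | zero => simp
  | succ n ih =>
    push_cast
    rw [add_mul, one_mul, Complex.cos_add]
    rw [show Complex.cos (Real.pi : ℂ) = -1 by
      rw [← Complex.ofReal_cos]; simp,
      show Complex.sin (Real.pi : ℂ) = 0 by
      rw [← Complex.ofReal_sin]; simp]
    push_cast at ih
    rw [ih]; ring

lemma sin_shift (n : ℕ) (x : ℂ) : Complex.sin (x - (n:ℂ) * Real.pi) = (-1)^n * Complex.sin x := by
  rw [Complex.sin_sub, cos_nat_pi, Complex.sin_nat_mul_pi]
  ring

/-- value of `(±It)^(-s)` for `t > 0`. -/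
lemma cpow_I_mul {t : ℝ} (ht : 0 < t) (s : ℂ) (σ : ℝ) (hσ : σ = 1 ∨ σ = -1) :
    ((σ:ℂ) * (I * t)) ^ (-s) = (t:ℂ) ^ (-s) * Complex.exp (-(σ:ℂ) * s * ((Real.pi:ℂ)/2) * I) := by
  have htne : ((σ:ℂ) * (I * t)) ≠ 0 := by
    rcases hσ with h | h <;> subst h <;> simp [Complex.ext_iff, ht.ne']
  have habs : ‖((σ:ℂ) * (I * t))‖ = t := by
    rcases hσ with h | h <;> subst h <;>
      simp [norm_mul, Complex.norm_real, abs_of_pos ht]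
  have harg : ((σ:ℂ) * (I * t)).arg = σ * (Real.pi/2) := by
    rcases hσ with h | h <;> subst h
    · rw [show ((1:ℝ):ℂ) * (I * t) = Complex.I * t by push_cast; ring]
      push_cast
      rw [Complex.arg_eq_pi_div_two_iff.2 (by simp [ht])]
      ring
    · push_cast
      rw [show (-1:ℂ) * (I * t) = -(Complex.I * t) by ring]
      rw [Complex.arg_eq_neg_pi_div_two_iff.2 (by simp [ht])]
      ring
  have hlog : Complex.log ((σ:ℂ) * (I * t)) = (Real.log t : ℂ) + (σ * (Real.pi/2) : ℝ) * I := by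
    apply Complex.ext
    · rw [Complex.log_re, habs]; simp
    · rw [Complex.log_im, harg]; simp
  rw [Complex.cpow_def_of_ne_zero htne, hlog]
  rw [show (t:ℂ) ^ (-s) = Complex.exp ((Real.log t : ℂ) * (-s)) by
    rw [Complex.cpow_def_of_ne_zero (by exact_mod_cast ht.ne' : (t:ℂ) ≠ 0)]
    congr 1
    rw [Complex.ofReal_log ht.le]]
  rw [← Complex.exp_add]
  congr 1
  push_cast
  ring

end misc

/-- Let `M ∈ ℕ` and `h ∈ ℂ` with `2M < Re 2h < 2M+2`. Let `u : ℝ → ℂ`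
be `(2M+1)`-times continuously differentiable such that all derivatives of order `≤ 2M+1`
decay exponentially on `[0,∞)`, `u^{(k)}(0) = 0` for every odd `k ≤ 2M-1`, and
`t ↦ ‖u^{(2M+1)}(t)‖ t^{2M - Re 2h}` is integrable on `(0,∞)`. Then
`lim_{ε↓0} ∫_0^∞ K_{2h}^ε(t) u(t) dt
  = -(sin(πh)/π) Γ(2h-2M) ∫_0^∞ u^{(2M+1)}(t) t^{-(2h-2M)} dt`. -/
theorem stmt_14 (M : ℕ) (h : ℂ)
    (h1 : (2 * M : ℝ) < (2 * h).re) (h2 : (2 * h).re < 2 * M + 2)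
    (u : ℝ → ℂ) (hu : ContDiff ℝ (2 * M + 1 : ℕ) u)
    (C c : ℝ) (hC : 0 < C) (hc : 0 < c)
    (hbound : ∀ k ≤ 2 * M + 1, ∀ t : ℝ, 0 ≤ t →
      ‖iteratedDeriv k u t‖ ≤ C * Real.exp (-c * t))
    (hodd : ∀ k, Odd k → k < 2 * M → iteratedDeriv k u 0 = 0)
    (hint : IntegrableOn
      (fun t : ℝ => ‖iteratedDeriv (2 * M + 1) u t‖ * t ^ ((2 * M : ℝ) - (2 * h).re))
      (Set.Ioi (0 : ℝ))) :
    Filter.Tendsto (fun ε : ℝ => ∫ t in Set.Ioi (0 : ℝ), K (2 * h) ε t * u t)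
      (nhdsWithin 0 (Set.Ioi 0))
      (nhds (-(Complex.sin ((Real.pi : ℂ) * h)) / (Real.pi : ℂ) *
        Complex.Gamma (2 * h - 2 * (M : ℂ)) *
        ∫ t in Set.Ioi (0 : ℝ),
          iteratedDeriv (2 * M + 1) u t * (t : ℂ) ^ (-(2 * h - 2 * (M : ℂ))))) := by
  set w : ℂ := 2 * h with hw
  have hπ : (Real.pi : ℂ) ≠ 0 := by
    exact_mod_cast Real.pi_ne_zero
  -- basic facts about derivatives of u
  have hud_cont : ∀ n, n ≤ 2*M+1 → Continuous (iteratedDeriv n u) := by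
    intro n hn
    exact hu.continuous_iteratedDeriv n (by exact_mod_cast Nat.cast_le.2 hn)
  have hud_deriv : ∀ n, n < 2*M+1 → ∀ t:ℝ, HasDerivAt (iteratedDeriv n u)
      (iteratedDeriv (n+1) u t) t := by
    intro n hn t
    have hdiff : Differentiable ℝ (iteratedDeriv n u) :=
      hu.differentiable_iteratedDeriv n (by exact_mod_cast Nat.cast_lt.2 hn)
    rw [iteratedDeriv_succ]
    exact (hdiff t).hasDerivAt
  have hre_pos : ∀ n : ℕ, n ≤ 2*M → 0 < (w - n).re := by
    intro n hn
    simp only [Complex.sub_re, Complex.natCast_re]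
    have hn' : (n:ℝ) ≤ 2*M := by exact_mod_cast hn
    have := h1
    rw [hw]
    linarith
  -- the families of integrals
  set A : ℝ → ℝ → ℕ → ℂ := fun σ ε n =>
    ∫ t in Ioi (0:ℝ), ((ε:ℂ) + σ * (I * t)) ^ (-(w - n + 1)) * iteratedDeriv n u t with hA
  set B : ℝ → ℕ → ℂ := fun ε n => A 1 ε n + (-1:ℂ)^n * A (-1) ε n with hBdef
  -- integration by parts step
  have hAstep : ∀ σ:ℝ, σ = 1 ∨ σ = -1 → ∀ ε:ℝ, 0 < ε → ∀ n, n ≤ 2*M →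
      A σ ε n = (-(σ:ℂ) * I / (w - n)) *
        ((ε:ℂ)^(-(w - n)) * iteratedDeriv n u 0 + A σ ε (n+1)) := by
    intro σ hσ ε hε n hn
    have key := ibp_step (s := w - n) hε hσ (hre_pos n hn)
        (fun t => hud_deriv n (by omega) t) (hud_cont (n+1) (by omega)) hc
        (hbound n (by omega)) (hbound (n+1) (by omega))
    have hexp : (fun t:ℝ => ((ε:ℂ) + σ*(I*t)) ^ (-(w - (n+1:ℕ) + 1)) * iteratedDeriv (n+1) u t)
        = fun t:ℝ => ((ε:ℂ) + σ*(I*t)) ^ (-(w - n)) * iteratedDeriv (n+1) u t := by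
      funext t
      congr 2
      push_cast
      ring
    simp only [hA]
    rw [hexp]
    exact key
  -- combined step with boundary cancellation
  have hBstep : ∀ ε:ℝ, 0 < ε → ∀ n, n ≤ 2*M → B ε n = (-I/(w - n)) * B ε (n+1) := by
    intro ε hε n hn
    have e1 := hAstep 1 (Or.inl rfl) ε hε n hn
    have e2 := hAstep (-1) (Or.inr rfl) ε hε n hn
    simp only [hBdef]
    rw [e1, e2]
    push_cast
    rcases Nat.even_or_odd n with he | ho
    · rw [he.neg_one_pow, (Even.add_one he).neg_one_pow]
      ring
    · have hn2 : n < 2*M := by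
        have : n ≠ 2*M := by
          rintro rfl
          exact (Nat.not_odd_iff_even.2 (even_two_mul M)) ho
        omega
      rw [hodd n ho hn2, ho.neg_one_pow, (Odd.add_one ho).neg_one_pow]
      ring
  -- iterate
  have hBiter : ∀ ε:ℝ, 0 < ε → ∀ m, m ≤ 2*M+1 →
      B ε 0 = (∏ j ∈ Finset.range m, (-I/(w - j))) * B ε m := by
    intro ε hε m
    induction m with
    | zero => simp
    | succ m ih =>
      intro hm
      rw [ih (by omega), hBstep ε hε m (by omega), Finset.prod_range_succ]
      ring
  -- express the original integral via B ε 0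
  have hK : ∀ ε:ℝ, 0 < ε → (∫ t in Ioi (0:ℝ), K w ε t * u t)
      = Complex.Gamma (1+w)/(2*(Real.pi:ℂ)) * B ε 0 := by
    intro ε hε
    have hre0 : (0:ℝ) ≤ (w - ((0:ℕ):ℂ) + 1).re := by
      have := hre_pos 0 (by omega)
      simp only [Complex.add_re, Complex.one_re]
      linarith
    have int1 : IntegrableOn (fun t : ℝ =>
        ((ε:ℂ) + (1:ℝ) * (I * t)) ^ (-(w - ((0:ℕ):ℂ) + 1)) * iteratedDeriv 0 u t) (Ioi (0:ℝ)) :=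
      integrable_aux hε hre0 (hud_cont 0 (by omega)) hc (hbound 0 (by omega))
    have int2 : IntegrableOn (fun t : ℝ =>
        ((ε:ℂ) + (-1:ℝ) * (I * t)) ^ (-(w - ((0:ℕ):ℂ) + 1)) * iteratedDeriv 0 u t) (Ioi (0:ℝ)) :=
      integrable_aux hε hre0 (hud_cont 0 (by omega)) hc (hbound 0 (by omega))
    have hfun : ∀ t:ℝ, K w ε t * u t
        = Complex.Gamma (1+w)/(2*(Real.pi:ℂ)) *
            (((ε:ℂ) + (1:ℝ)*(I*t)) ^ (-(w - ((0:ℕ):ℂ) + 1)) * iteratedDeriv 0 u t)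
        + Complex.Gamma (1+w)/(2*(Real.pi:ℂ)) *
            (((ε:ℂ) + (-1:ℝ)*(I*t)) ^ (-(w - ((0:ℕ):ℂ) + 1)) * iteratedDeriv 0 u t) := by
      intro t
      rw [K, iteratedDeriv_zero]
      have hb1 : ((ε:ℂ) + ((1:ℝ):ℂ)*(I*t)) = (ε:ℂ) + I * t := by push_cast; ring
      have hb2 : ((ε:ℂ) + ((-1:ℝ):ℂ)*(I*t)) = (ε:ℂ) - I * t := by push_cast; ring
      have hb3 : -(w - ((0:ℕ):ℂ) + 1) = -(w+1) := by push_cast; ring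
      rw [hb1, hb2, hb3]
      ring
    calc ∫ t in Ioi (0:ℝ), K w ε t * u t
        = ∫ t in Ioi (0:ℝ), (Complex.Gamma (1+w)/(2*(Real.pi:ℂ)) *
            (((ε:ℂ) + (1:ℝ)*(I*t)) ^ (-(w - ((0:ℕ):ℂ) + 1)) * iteratedDeriv 0 u t)
          + Complex.Gamma (1+w)/(2*(Real.pi:ℂ)) *
            (((ε:ℂ) + (-1:ℝ)*(I*t)) ^ (-(w - ((0:ℕ):ℂ) + 1)) * iteratedDeriv 0 u t)) := by
          apply integral_congr_ae
          filter_upwards with t using hfun t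
      _ = Complex.Gamma (1+w)/(2*(Real.pi:ℂ)) * B ε 0 := by
          rw [integral_add (int1.const_mul _) (int2.const_mul _),
            integral_const_mul, integral_const_mul]
          simp only [hBdef, hA]
          push_cast
          ring
  -- the final exponent
  set q : ℂ := w - ((2*M+1:ℕ):ℂ) + 1 with hqdef
  have hq : q = w - 2*(M:ℂ) := by rw [hqdef]; push_cast; ring
  have hq2 : q = 2*h - 2*(M:ℂ) := by rw [hq, hw]
  have hqre : q.re = w.re - 2*M := by
    rw [hq]
    simp
  have hqpos : 0 < q.re := by
    rw [hqre, hw]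
    have := h1
    linarith
  -- B ε (2M+1) as a single integral
  have hintA : ∀ σ:ℝ, σ = 1 ∨ σ = -1 → ∀ ε:ℝ, 0 < ε → IntegrableOn (fun t : ℝ =>
      ((ε:ℂ) + σ * (I * t)) ^ (-q) * iteratedDeriv (2*M+1) u t) (Ioi (0:ℝ)) := by
    intro σ hσ ε hε
    exact integrable_aux hε hqpos.le (hud_cont (2*M+1) le_rfl) hc (hbound (2*M+1) le_rfl)
  have hBfinal : ∀ ε:ℝ, 0 < ε → B ε (2*M+1)
      = ∫ t in Ioi (0:ℝ), (((ε:ℂ) + (1:ℝ)*(I*t)) ^ (-q) - ((ε:ℂ) + (-1:ℝ)*(I*t)) ^ (-q)) *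
          iteratedDeriv (2*M+1) u t := by
    intro ε hε
    have hexp : ∀ σ:ℝ, (fun t:ℝ => ((ε:ℂ) + σ*(I*t)) ^ (-(w - ((2*M+1:ℕ):ℂ) + 1)) *
        iteratedDeriv (2*M+1) u t)
        = fun t:ℝ => ((ε:ℂ) + σ*(I*t)) ^ (-q) * iteratedDeriv (2*M+1) u t := by
      intro σ; funext t; rw [hqdef]
    simp only [hBdef, hA]
    rw [hexp 1, hexp (-1), Odd.neg_one_pow (odd_two_mul_add_one M), neg_one_mul,
      ← sub_eq_add_neg, ← integral_sub (hintA 1 (Or.inl rfl) ε hε) (hintA (-1) (Or.inr rfl) ε hε)]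
    apply integral_congr_ae
    filter_upwards with t
    ring
  -- dominated convergence
  set Fl : ℝ → ℂ := fun t => (-2*I*Complex.sin (q * ((Real.pi:ℂ)/2))) *
      ((t:ℂ)^(-q) * iteratedDeriv (2*M+1) u t) with hFl
  have hDCT : Tendsto (fun ε:ℝ => ∫ t in Ioi (0:ℝ),
      (((ε:ℂ) + (1:ℝ)*(I*t)) ^ (-q) - ((ε:ℂ) + (-1:ℝ)*(I*t)) ^ (-q)) *
        iteratedDeriv (2*M+1) u t)
      (nhdsWithin 0 (Ioi 0)) (nhds (∫ t in Ioi (0:ℝ), Fl t)) := by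
    apply tendsto_integral_filter_of_dominated_convergence
      (bound := fun t => (2 * Real.exp (Real.pi/2 * |q.im|)) *
        (‖iteratedDeriv (2*M+1) u t‖ * t ^ ((2*M:ℝ) - (2*h).re)))
    · filter_upwards [self_mem_nhdsWithin] with ε hε
      have hε' : 0 < ε := hε
      exact (((cont_kernel hε' 1 q).sub (cont_kernel hε' (-1) q)).mul
        (hud_cont (2*M+1) le_rfl)).aestronglyMeasurable
    · filter_upwards [self_mem_nhdsWithin] with ε hε
      have hε' : 0 < ε := hε
      rw [ae_restrict_iff' measurableSet_Ioi]
      filter_upwards with t ht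
      rw [norm_mul]
      have hb1 := kb_t hε' (Or.inl rfl) (σ := (1:ℝ)) hqpos.le t ht
      have hb2 := kb_t hε' (Or.inr rfl) (σ := (-1:ℝ)) hqpos.le t ht
      have hsum : ‖((ε:ℂ) + (1:ℝ)*(I*t)) ^ (-q) - ((ε:ℂ) + (-1:ℝ)*(I*t)) ^ (-q)‖
          ≤ 2 * (t ^ (-q.re) * Real.exp (Real.pi/2 * |q.im|)) := by
        refine le_trans (norm_sub_le _ _) ?_
        have := add_le_add hb1 hb2
        linarith
      have hrw : t ^ (-q.re) = t ^ ((2*M:ℝ) - (2*h).re) := by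
        congr 1
        rw [hqre, hw]
        ring
      calc ‖((ε:ℂ) + (1:ℝ)*(I*t)) ^ (-q) - ((ε:ℂ) + (-1:ℝ)*(I*t)) ^ (-q)‖ *
            ‖iteratedDeriv (2*M+1) u t‖
          ≤ (2 * (t ^ (-q.re) * Real.exp (Real.pi/2 * |q.im|))) * ‖iteratedDeriv (2*M+1) u t‖ :=
            mul_le_mul_of_nonneg_right hsum (norm_nonneg _)
        _ = _ := by rw [hrw]; ring
    · exact hint.const_mul _
    · rw [ae_restrict_iff' measurableSet_Ioi]
      filter_upwards with t ht
      have hslit1 : (((0:ℝ):ℂ) + ((1:ℝ):ℂ)*(I*(t:ℂ))) ∈ Complex.slitPlane := by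
        rw [Complex.mem_slitPlane_iff]
        right
        simp [(mem_Ioi.1 ht).ne']
      have hslit2 : (((0:ℝ):ℂ) + ((-1:ℝ):ℂ)*(I*(t:ℂ))) ∈ Complex.slitPlane := by
        rw [Complex.mem_slitPlane_iff]
        right
        simp [(mem_Ioi.1 ht).ne']
      have hcont1 : ContinuousAt (fun ε:ℝ => ((ε:ℂ) + (1:ℝ)*(I*t)) ^ (-q)) 0 := by
        refine ContinuousAt.cpow ?_ continuousAt_const hslit1
        fun_prop
      have hcont2 : ContinuousAt (fun ε:ℝ => ((ε:ℂ) + (-1:ℝ)*(I*t)) ^ (-q)) 0 := by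
        refine ContinuousAt.cpow ?_ continuousAt_const hslit2
        fun_prop
      have htend : Tendsto (fun ε:ℝ =>
          (((ε:ℂ) + (1:ℝ)*(I*t)) ^ (-q) - ((ε:ℂ) + (-1:ℝ)*(I*t)) ^ (-q)) *
            iteratedDeriv (2*M+1) u t)
          (nhdsWithin 0 (Ioi 0))
          (nhds (((((0:ℝ):ℂ) + (1:ℝ)*(I*(t:ℂ))) ^ (-q) - (((0:ℝ):ℂ) + (-1:ℝ)*(I*(t:ℂ))) ^ (-q)) *
            iteratedDeriv (2*M+1) u t)) := by
        exact ((hcont1.tendsto.mono_left nhdsWithin_le_nhds).sub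
          (hcont2.tendsto.mono_left nhdsWithin_le_nhds)).mul tendsto_const_nhds
      have hval : ((((0:ℝ):ℂ) + (1:ℝ)*(I*(t:ℂ))) ^ (-q) - (((0:ℝ):ℂ) + (-1:ℝ)*(I*(t:ℂ))) ^ (-q)) *
          iteratedDeriv (2*M+1) u t = Fl t := by
        have v1 := cpow_I_mul ht q 1 (Or.inl rfl)
        have v2 := cpow_I_mul ht q (-1) (Or.inr rfl)
        rw [show (((0:ℝ):ℂ) + (1:ℝ)*(I*(t:ℂ))) = (((1:ℝ)):ℂ) * (I*(t:ℂ)) by push_cast; ring,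
            show (((0:ℝ):ℂ) + (-1:ℝ)*(I*(t:ℂ))) = (((-1:ℝ)):ℂ) * (I*(t:ℂ)) by push_cast; ring,
            v1, v2, hFl]
        rw [show -(((1:ℝ)):ℂ) * q * ((Real.pi:ℂ)/2) * I = -(q*((Real.pi:ℂ)/2))*I by push_cast; ring,
            show -(((-1:ℝ)):ℂ) * q * ((Real.pi:ℂ)/2) * I = (q*((Real.pi:ℂ)/2))*I by push_cast; ring]
        rw [Complex.sin]
        linear_combination ((Complex.exp (-(q*((Real.pi:ℂ)/2))*I) -
          Complex.exp ((q*((Real.pi:ℂ)/2))*I)) * (t:ℂ)^(-q) *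
          iteratedDeriv (2*M+1) u t) * Complex.I_mul_I
      rw [← hval]
      exact htend
  -- integral of the limit function
  have hFl_int : (∫ t in Ioi (0:ℝ), Fl t)
      = (-2*I*Complex.sin (q * ((Real.pi:ℂ)/2))) *
        ∫ t in Ioi (0:ℝ), (t:ℂ)^(-q) * iteratedDeriv (2*M+1) u t := by
    simp only [hFl]
    exact integral_const_mul _ _
  have hJcomm : (∫ t in Ioi (0:ℝ), (t:ℂ)^(-q) * iteratedDeriv (2*M+1) u t)
      = ∫ t in Ioi (0:ℝ), iteratedDeriv (2*M+1) u t * (t:ℂ)^(-(w - 2*(M:ℂ))) := by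
    rw [← hq]
    apply integral_congr_ae
    filter_upwards with t
    ring
  -- the constant
  set Cst : ℂ := Complex.Gamma (1+w)/(2*(Real.pi:ℂ)) *
    (∏ j ∈ Finset.range (2*M+1), (-I/(w - j))) with hCst
  have hPne : (∏ j ∈ Finset.range (2*M+1), (w - (j:ℂ))) ≠ 0 := by
    rw [Finset.prod_ne_zero_iff]
    intro j hj
    have hjle : j ≤ 2*M := by
      have := Finset.mem_range.1 hj
      omega
    intro h0
    exact (hre_pos j hjle).ne' (by rw [h0]; simp)
  have hGam : Complex.Gamma (1+w)
      = Complex.Gamma q * ∏ j ∈ Finset.range (2*M+1), (w - (j:ℂ)) := by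
    have hcond : ((2*M+1:ℕ):ℝ) < w.re + 1 := by
      push_cast
      have := h1
      rw [hw]
      linarith
    rw [show (1:ℂ)+w = w + 1 by ring, gamma_prod w (2*M+1) hcond]
    congr 2
    rw [hqdef]
    ring
  have hsin : Complex.sin (q * ((Real.pi:ℂ)/2)) = (-1)^M * Complex.sin ((Real.pi:ℂ) * h) := by
    rw [show q * ((Real.pi:ℂ)/2) = (Real.pi:ℂ)*h - (M:ℂ)*(Real.pi:ℂ) by rw [hq2]; ring]
    exact sin_shift M _
  have hpow : (-I:ℂ)^(2*M+1) = (-1:ℂ)^M * (-I) := by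
    rw [pow_succ, pow_mul]
    congr 2
    rw [neg_sq, Complex.I_sq]
  have hx : ((-1:ℂ))^M * ((-1:ℂ))^M = 1 := by
    rw [← pow_add]
    exact Even.neg_one_pow ⟨M, rfl⟩
  have hscalar : Cst * (-2*I*Complex.sin (q * ((Real.pi:ℂ)/2)))
      = -(Complex.sin ((Real.pi:ℂ) * h)) / (Real.pi:ℂ) * Complex.Gamma (w - 2*(M:ℂ)) := by
    rw [hCst, hGam, Finset.prod_div_distrib, Finset.prod_const, Finset.card_range,
      hsin, hpow, ← hq]
    have hm2 : ((-1:ℂ))^(M*2) = 1 := by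
      rw [mul_comm, pow_mul]
      norm_num
    have hI2 : (I:ℂ)^2 = -1 := Complex.I_sq
    field_simp
    ring_nf
    rw [hm2, hI2]
    ring
  -- put everything together
  have hCstB : (fun ε:ℝ => ∫ t in Ioi (0:ℝ), K w ε t * u t) =ᶠ[nhdsWithin (0:ℝ) (Ioi 0)]
      (fun ε:ℝ => Cst * ∫ t in Ioi (0:ℝ),
        (((ε:ℂ)+(1:ℝ)*(I*t))^(-q) - ((ε:ℂ)+(-1:ℝ)*(I*t))^(-q)) * iteratedDeriv (2*M+1) u t) := by
    filter_upwards [self_mem_nhdsWithin] with ε hε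
    have hε' : (0:ℝ) < ε := hε
    rw [hK ε hε', hBiter ε hε' (2*M+1) le_rfl, hBfinal ε hε', hCst]
    ring
  have hmain := (Filter.Tendsto.const_mul Cst hDCT).congr' hCstB.symm
  have hfinal : Cst * (∫ t in Ioi (0:ℝ), Fl t)
      = -(Complex.sin ((Real.pi:ℂ) * h)) / (Real.pi:ℂ) * Complex.Gamma (w - 2*(M:ℂ)) *
        ∫ t in Ioi (0:ℝ), iteratedDeriv (2*M+1) u t * (t:ℂ)^(-(w - 2*(M:ℂ))) := by
    rw [hFl_int, hJcomm, ← mul_assoc, hscalar]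
  rw [← hfinal]
  exact hmain
end

section
/- For every real s > −1/2, every integer k ≥ 1 and every real β > 0, one has ∫_0^1 τ^{s+k−1} · (1−τ)^s · log(β·τ) dτ = (Γ(s+k)·Γ(s+1)/Γ(2s+1+k)) · ( log β + ψ(s+k) − ψ(2s+1+k) ), where Γ is the real Gamma function, ψ(y) = Γ'(y)/Γ(y) is the logarithmic derivative of the real Gamma function (Γ' its derivative), log is the natural logarithm, and the powers are real powers of positive reals; the integrand is absolutely integrable on (0,1). -/
open MeasureTheory

/-- `ψ(y) = Γ'(y)/Γ(y)`, the logarithmic derivative of the real Gamma function. -/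
noncomputable def digamma (y : ℝ) : ℝ := deriv Real.Gamma y / Real.Gamma y

open Set

private lemma beta_integrable' {a b : ℝ} (ha : 0 < a) (hb : -1 < b) :
    IntegrableOn (fun τ : ℝ => τ ^ (a - 1) * (1 - τ) ^ b) (Ioo (0:ℝ) 1) := by
  have h := Complex.betaIntegral_convergent (u := (a:ℂ)) (v := (b+1:ℂ)) (by simpa) (by simp; linarith)
  have h2 : IntegrableOn (fun x : ℝ => (x:ℂ) ^ ((a:ℂ) - 1) * ((1:ℂ) - x) ^ ((b:ℂ)+1-1)) (Ioo (0:ℝ) 1) :=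
    (intervalIntegrable_iff_integrableOn_Ioo_of_le (by norm_num : (0:ℝ) ≤ 1)).mp h
  refine (IntegrableOn.congr_fun h2.re (fun x hx => ?_) measurableSet_Ioo)
  have hx0 : (0:ℝ) ≤ x := hx.1.le
  have hx1 : (0:ℝ) ≤ 1 - x := by linarith [hx.2.le]
  rw [show (b:ℂ)+1-1 = ((b:ℝ):ℂ) by ring,
    show (a:ℂ)-1 = ((a-1:ℝ):ℂ) by push_cast; ring,
    ← Complex.ofReal_cpow hx0, ← Complex.ofReal_one, ← Complex.ofReal_sub,
    ← Complex.ofReal_cpow hx1, ← Complex.ofReal_mul]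
  simp

private lemma real_beta' {a b : ℝ} (ha : 0 < a) (hb : 0 < b) :
    ∫ τ in Ioo (0:ℝ) 1, τ ^ (a - 1) * (1 - τ) ^ (b - 1) =
      Real.Gamma a * Real.Gamma b / Real.Gamma (a + b) := by
  have hab : Real.Gamma (a + b) ≠ 0 := (Real.Gamma_pos_of_pos (by linarith)).ne'
  have h := Complex.Gamma_mul_Gamma_eq_betaIntegral (s := (a:ℂ)) (t := (b:ℂ)) (by simpa) (by simpa)
  rw [Complex.betaIntegral] at h
  have hcong : (∫ x in (0:ℝ)..1, (x:ℂ) ^ ((a:ℂ) - 1) * ((1:ℂ) - x) ^ ((b:ℂ) - 1)) =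
      ((∫ x in (0:ℝ)..1, x ^ (a-1) * (1-x) ^ (b-1) : ℝ) : ℂ) := by
    rw [← intervalIntegral.integral_ofReal]
    refine intervalIntegral.integral_congr (fun x hx => ?_)
    rw [uIcc_of_le (by norm_num)] at hx
    have hx0 : (0:ℝ) ≤ x := hx.1
    have hx1 : (0:ℝ) ≤ 1 - x := by linarith [hx.2]
    rw [show (a:ℂ)-1 = ((a-1:ℝ):ℂ) by push_cast; ring,
      show (b:ℂ)-1 = ((b-1:ℝ):ℂ) by push_cast; ring,
      ← Complex.ofReal_cpow hx0, ← Complex.ofReal_one, ← Complex.ofReal_sub,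
      ← Complex.ofReal_cpow hx1, ← Complex.ofReal_mul]
  rw [hcong] at h
  rw [show ((a:ℂ)+b) = ((a+b:ℝ):ℂ) by push_cast; ring, Complex.Gamma_ofReal,
    Complex.Gamma_ofReal, Complex.Gamma_ofReal, ← Complex.ofReal_mul, ← Complex.ofReal_mul,
    Complex.ofReal_inj] at h
  have h2 : ∫ x in (0:ℝ)..1, x ^ (a-1) * (1-x) ^ (b-1) =
      Real.Gamma a * Real.Gamma b / Real.Gamma (a + b) := by
    field_simp
    linarith [h]
  rw [← h2, intervalIntegral.integral_of_le (by norm_num : (0:ℝ) ≤ 1),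
    ← integral_Ioc_eq_integral_Ioo]

private lemma beta_hasDeriv' {a₀ s : ℝ} (ha : 0 < a₀) (hs : -1 < s) :
    IntegrableOn (fun τ : ℝ => Real.log τ * (τ ^ (a₀ - 1) * (1 - τ) ^ s)) (Ioo (0:ℝ) 1) ∧
    HasDerivAt (fun a => ∫ τ in Ioo (0:ℝ) 1, τ ^ (a - 1) * (1 - τ) ^ s)
      (∫ τ in Ioo (0:ℝ) 1, Real.log τ * (τ ^ (a₀ - 1) * (1 - τ) ^ s)) a₀ := by
  have hmeas : ∀ a : ℝ, AEStronglyMeasurable (fun τ : ℝ => τ ^ (a - 1) * (1 - τ) ^ s)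
      (volume.restrict (Ioo (0:ℝ) 1)) := by
    intro a
    refine ContinuousOn.aestronglyMeasurable ?_ measurableSet_Ioo
    exact (continuousOn_id.rpow_const fun x hx => Or.inl hx.1.ne').mul
      ((continuousOn_const.sub continuousOn_id).rpow_const
        fun x hx => Or.inl (by show (1:ℝ) - x ≠ 0; intro h; nlinarith [hx.2]))
  have hmeas' : AEStronglyMeasurable
      (fun τ : ℝ => Real.log τ * (τ ^ (a₀ - 1) * (1 - τ) ^ s))
      (volume.restrict (Ioo (0:ℝ) 1)) := by
    refine ContinuousOn.aestronglyMeasurable ?_ measurableSet_Ioo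
    exact (Real.continuousOn_log.mono (fun x hx => ne_of_gt hx.1)).mul
      ((continuousOn_id.rpow_const fun x hx => Or.inl hx.1.ne').mul
        ((continuousOn_const.sub continuousOn_id).rpow_const
          fun x hx => Or.inl (by show (1:ℝ) - x ≠ 0; intro h; nlinarith [hx.2])))
  have key := hasDerivAt_integral_of_dominated_loc_of_deriv_le
    (F := fun a (τ : ℝ) => τ ^ (a - 1) * (1 - τ) ^ s)
    (F' := fun a (τ : ℝ) => Real.log τ * (τ ^ (a - 1) * (1 - τ) ^ s))
    (x₀ := a₀) (s := Metric.ball a₀ (a₀ / 2))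
    (bound := fun τ : ℝ => (4 / a₀) * (τ ^ (a₀ / 4 - 1) * (1 - τ) ^ s))
    (Metric.ball_mem_nhds _ (by positivity))
    (Filter.Eventually.of_forall fun a => hmeas a)
    (beta_integrable' ha hs)
    hmeas'
    ?_ (((beta_integrable' (by positivity) hs).const_mul _))
    ?_
  · exact key
  · refine (ae_restrict_iff' measurableSet_Ioo).2 (Filter.Eventually.of_forall fun τ hτ => ?_)
    intro a haball
    have hτ0 := hτ.1
    have hτ1 := hτ.2
    have h1τ : (0:ℝ) < 1 - τ := by linarith
    rw [Metric.mem_ball, Real.dist_eq, abs_lt] at haball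
    have hc : a₀ / 2 - 1 ≤ a - 1 := by linarith [haball.1]
    have hmono : τ ^ (a - 1) ≤ τ ^ (a₀ / 2 - 1) :=
      Real.rpow_le_rpow_of_exponent_ge hτ0 hτ1.le hc
    have hlog : -Real.log τ ≤ (4 / a₀) * τ ^ (-(a₀/4)) := by
      have h1 : Real.log (τ ^ (-(a₀/4))) ≤ τ ^ (-(a₀/4)) - 1 :=
        Real.log_le_sub_one_of_pos (Real.rpow_pos_of_pos hτ0 _)
      rw [Real.log_rpow hτ0] at h1
      have h2 : -(a₀/4) * Real.log τ ≤ τ ^ (-(a₀/4)) := by linarith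
      have h3 : (0:ℝ) < a₀ / 4 := by positivity
      rw [neg_mul] at h2
      calc -Real.log τ = (4/a₀) * (a₀/4 * (-Real.log τ)) := by field_simp
        _ ≤ (4/a₀) * τ ^ (-(a₀/4)) := by
            apply mul_le_mul_of_nonneg_left _ (by positivity)
            calc a₀/4 * -Real.log τ = -(a₀/4 * Real.log τ) := by ring
              _ ≤ τ ^ (-(a₀/4)) := h2
    have habs : |Real.log τ| = -Real.log τ :=
      abs_of_nonpos (Real.log_nonpos hτ0.le hτ1.le)
    rw [norm_mul, norm_mul, Real.norm_eq_abs, Real.norm_eq_abs, Real.norm_eq_abs, habs,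
      abs_of_nonneg (Real.rpow_nonneg hτ0.le _), abs_of_nonneg (Real.rpow_nonneg h1τ.le _)]
    have step1 : -Real.log τ * (τ ^ (a - 1) * (1 - τ) ^ s)
        ≤ ((4/a₀) * τ ^ (-(a₀/4))) * (τ ^ (a₀/2 - 1) * (1 - τ) ^ s) := by
      apply mul_le_mul hlog
      · exact mul_le_mul_of_nonneg_right hmono (Real.rpow_nonneg h1τ.le _)
      · positivity
      · positivity
    calc -Real.log τ * (τ ^ (a - 1) * (1 - τ) ^ s)
        ≤ ((4/a₀) * τ ^ (-(a₀/4))) * (τ ^ (a₀/2 - 1) * (1 - τ) ^ s) := step1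
      _ = (4/a₀) * (τ ^ (-(a₀/4)) * τ ^ (a₀/2 - 1) * (1 - τ) ^ s) := by ring
      _ = (4/a₀) * (τ ^ (a₀/4 - 1) * (1 - τ) ^ s) := by
          rw [← Real.rpow_add hτ0]; ring_nf
  · refine (ae_restrict_iff' measurableSet_Ioo).2 (Filter.Eventually.of_forall fun τ hτ => ?_)
    intro a _
    have hτ0 := hτ.1
    have hd : HasDerivAt (fun a : ℝ => τ ^ (a - 1)) (Real.log τ * τ ^ (a - 1)) a := by
      have := ((Real.hasStrictDerivAt_const_rpow hτ0 (a - 1)).hasDerivAt).comp a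
        ((hasDerivAt_id a).sub_const 1)
      simpa [mul_comm, Function.comp_def] using this
    simpa [mul_comm, mul_assoc, mul_left_comm] using hd.mul_const ((1 - τ) ^ s)

/-- For every real `s > -1/2`, integer `k ≥ 1` and real `β > 0`,
`∫_0^1 τ^{s+k-1} (1-τ)^s log(βτ) dτ
  = (Γ(s+k)Γ(s+1)/Γ(2s+1+k)) (log β + ψ(s+k) - ψ(2s+1+k))`. -/
theorem stmt_16 (s : ℝ) (hs : -(1 / 2 : ℝ) < s) (k : ℕ) (hk : 1 ≤ k)
    (β : ℝ) (hβ : 0 < β) :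
    (∫ τ in Set.Ioo (0 : ℝ) 1, τ ^ (s + k - 1) * (1 - τ) ^ s * Real.log (β * τ)) =
      Real.Gamma (s + k) * Real.Gamma (s + 1) / Real.Gamma (2 * s + 1 + k) *
        (Real.log β + digamma (s + k) - digamma (2 * s + 1 + k)) := by
  set a₀ : ℝ := s + k with ha₀def
  set b : ℝ := s + 1 with hbdef
  have hk1 : (1:ℝ) ≤ (k:ℝ) := by exact_mod_cast hk
  have ha₀ : 0 < a₀ := by simp only [ha₀def]; linarith
  have hb : 0 < b := by simp only [hbdef]; linarith
  have hs1 : (-1:ℝ) < s := by linarith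
  have hab : a₀ + b = 2 * s + 1 + k := by simp only [ha₀def, hbdef]; ring
  have hΓab : (0:ℝ) < Real.Gamma (a₀ + b) := Real.Gamma_pos_of_pos (by linarith)
  -- the Beta value
  have hBval : ∀ a : ℝ, 0 < a →
      (∫ τ in Set.Ioo (0:ℝ) 1, τ ^ (a - 1) * (1 - τ) ^ s) =
      Real.Gamma a * Real.Gamma b / Real.Gamma (a + b) := by
    intro a haa
    have := real_beta' haa hb
    simpa only [hbdef, add_sub_cancel_right] using this
  -- derivative of the integral
  obtain ⟨hint_log, hderivI⟩ := beta_hasDeriv' ha₀ hs1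
  -- derivative of the Gamma expression
  have hne : ∀ y : ℝ, 0 < y → ∀ m : ℕ, y ≠ -m := by
    intro y hy m
    have : (0:ℝ) ≤ m := Nat.cast_nonneg m
    intro h; rw [h] at hy; linarith
  have hΓa₀ : (0:ℝ) < Real.Gamma a₀ := Real.Gamma_pos_of_pos ha₀
  have hΓb : (0:ℝ) < Real.Gamma b := Real.Gamma_pos_of_pos hb
  have hd1 : HasDerivAt (fun a : ℝ => Real.Gamma a * Real.Gamma b)
      (deriv Real.Gamma a₀ * Real.Gamma b) a₀ :=
    ((Real.differentiableAt_Gamma (hne a₀ ha₀)).hasDerivAt).mul_const _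
  have hd2 : HasDerivAt (fun a : ℝ => Real.Gamma (a + b))
      (deriv Real.Gamma (a₀ + b)) a₀ := by
    have := ((Real.differentiableAt_Gamma (hne (a₀ + b) (by linarith))).hasDerivAt).comp a₀
      ((hasDerivAt_id a₀).add_const b)
    simpa [Function.comp_def] using this
  have hdg : HasDerivAt (fun a : ℝ => Real.Gamma a * Real.Gamma b / Real.Gamma (a + b))
      ((deriv Real.Gamma a₀ * Real.Gamma b * Real.Gamma (a₀ + b) -
        Real.Gamma a₀ * Real.Gamma b * deriv Real.Gamma (a₀ + b)) / (Real.Gamma (a₀ + b)) ^ 2)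
      a₀ := hd1.div hd2 hΓab.ne'
  -- the two functions agree near a₀
  have heq : (fun a : ℝ => ∫ τ in Set.Ioo (0:ℝ) 1, τ ^ (a - 1) * (1 - τ) ^ s) =ᶠ[nhds a₀]
      (fun a : ℝ => Real.Gamma a * Real.Gamma b / Real.Gamma (a + b)) := by
    filter_upwards [isOpen_Ioi.mem_nhds (show a₀ ∈ Set.Ioi (0:ℝ) from ha₀)] with a haa
    exact hBval a haa
  have hderivI' : HasDerivAt (fun a : ℝ => Real.Gamma a * Real.Gamma b / Real.Gamma (a + b))
      (∫ τ in Set.Ioo (0:ℝ) 1, Real.log τ * (τ ^ (a₀ - 1) * (1 - τ) ^ s)) a₀ :=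
    hderivI.congr_of_eventuallyEq heq.symm
  have hDeq : (∫ τ in Set.Ioo (0:ℝ) 1, Real.log τ * (τ ^ (a₀ - 1) * (1 - τ) ^ s)) =
      Real.Gamma a₀ * Real.Gamma b / Real.Gamma (a₀ + b) * (digamma a₀ - digamma (a₀ + b)) := by
    rw [hderivI'.unique hdg]
    simp only [digamma]
    field_simp
  -- split the main integral
  have hsplit : (∫ τ in Set.Ioo (0:ℝ) 1, τ ^ (s + k - 1) * (1 - τ) ^ s * Real.log (β * τ)) =
      (∫ τ in Set.Ioo (0:ℝ) 1, (Real.log β * (τ ^ (a₀ - 1) * (1 - τ) ^ s)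
        + Real.log τ * (τ ^ (a₀ - 1) * (1 - τ) ^ s))) := by
    refine setIntegral_congr_fun measurableSet_Ioo (fun τ hτ => ?_)
    rw [Real.log_mul hβ.ne' hτ.1.ne']
    show τ ^ (s + (k:ℝ) - 1) * (1 - τ) ^ s * (Real.log β + Real.log τ) = _
    have : s + (k:ℝ) - 1 = a₀ - 1 := by simp only [ha₀def]
    rw [this]; ring
  have hint1 : IntegrableOn (fun τ : ℝ => Real.log β * (τ ^ (a₀ - 1) * (1 - τ) ^ s))
      (Set.Ioo (0:ℝ) 1) := (beta_integrable' ha₀ hs1).const_mul _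
  rw [hsplit, integral_add hint1 hint_log, integral_const_mul, hBval a₀ ha₀, hDeq, ← hab]
  ring
end
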